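/- Let (εᵢ)_{i≥1} be i.i.d. copies of a random element ε of D'₀, independent of (Γᵢ)_{i≥1}, the successive points of a unit-intensity homogeneous Poisson process on [0,∞). Assume E ∫₀^∞ min(1, |ε(t)|) t⁻² dt < ∞. Then for every t ≥ 0, the series ∑_{i=1}^∞ εᵢ(Γᵢ⁻¹ t) converges absolutely almost surely (i.e. ∑_{i=1}^∞ |εᵢ(Γᵢ⁻¹ t)| < ∞ a.s.). -/

import Mathlib

open MeasureTheory ProbabilityTheory
open scoped NNReal ENNReal

noncomputable section

/-- A function on `[0,∞)` is càdlàg if it is right-continuous everywhere and has left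
limits at every positive time. -/
def Cadlag (f : ℝ≥0 → ℝ) : Prop :=
  (∀ t : ℝ≥0, ContinuousWithinAt f (Set.Ici t) t) ∧
  (∀ t : ℝ≥0, 0 < t → ∃ l : ℝ, Filter.Tendsto f (nhdsWithin t (Set.Iio t)) (nhds l))

/-- `Γᵢ = E₀ + ⋯ + Eᵢ`, the successive points of the unit-intensity Poisson process built
from the interarrival times `E`. -/
def gammaPt {Ω : Type*} (E : ℕ → Ω → ℝ) (i : ℕ) (ω : Ω) : ℝ :=
  ∑ j ∈ Finset.range (i + 1), E j ω


section AuxST6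
open Filter Real


lemma measurable_eval_countable {α β : Type*} [MeasurableSpace α] [MeasurableSpace β]
    {v : α → ℝ≥0} (hv : Measurable v) (hc : (Set.range v).Countable)
    {F : α → ℝ≥0 → β} (hF : ∀ q, Measurable fun a => F a q) :
    Measurable fun a => F a (v a) := by
  intro B hB
  have heq : (fun a => F a (v a)) ⁻¹' B =
      ⋃ q ∈ Set.range v, (v ⁻¹' {q} ∩ {a | F a q ∈ B}) := by
    ext a
    simp only [Set.mem_preimage, Set.mem_iUnion, Set.mem_inter_iff, Set.mem_setOf_eq,
      Set.mem_singleton_iff]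
    constructor
    · intro h; exact ⟨v a, ⟨a, rfl⟩, rfl, h⟩
    · rintro ⟨q, _, hva, h⟩; rwa [hva]
  rw [heq]
  exact MeasurableSet.biUnion hc fun q _ =>
    (hv (measurableSet_singleton q)).inter (hF q hB)

def dyad (n : ℕ) (x : ℝ≥0) : ℝ≥0 := (Nat.ceil (x * 2 ^ n) : ℝ≥0) / 2 ^ n

lemma two_pow_ne (n : ℕ) : ((2 : ℝ≥0) ^ n) ≠ 0 := by positivity

lemma le_dyad (n : ℕ) (x : ℝ≥0) : x ≤ dyad n x := by
  rw [dyad, le_div_iff₀ ((two_pow_ne n).bot_lt)]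
  exact Nat.le_ceil _

lemma dyad_le (n : ℕ) (x : ℝ≥0) : dyad n x ≤ x + ((2 : ℝ≥0) ^ n)⁻¹ := by
  rw [dyad, div_le_iff₀ ((two_pow_ne n).bot_lt), add_mul, inv_mul_cancel₀ (two_pow_ne n)]
  exact (Nat.ceil_lt_add_one zero_le).le

lemma dyad_mem_range (n : ℕ) (x : ℝ≥0) :
    dyad n x ∈ Set.range (fun k : ℕ => (k : ℝ≥0) / 2 ^ n) := ⟨_, rfl⟩

lemma measurable_ceil_nnreal : Measurable fun y : ℝ≥0 => (Nat.ceil y : ℕ) := by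
  apply measurable_to_countable'
  intro k
  match k with
  | 0 =>
    have h : (fun y : ℝ≥0 => (Nat.ceil y : ℕ)) ⁻¹' {0} = Set.Iic 0 := by
      ext y; simp [Nat.ceil_eq_zero]
    rw [h]; exact measurableSet_Iic
  | (k + 1) =>
    have h : (fun y : ℝ≥0 => (Nat.ceil y : ℕ)) ⁻¹' {k + 1}
        = Set.Ioc ((k : ℝ≥0)) ((k : ℝ≥0) + 1) := by
      ext y
      simp only [Set.mem_preimage, Set.mem_singleton_iff, Set.mem_Ioc,
        Nat.ceil_eq_iff (Nat.succ_ne_zero k)]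
      push_cast
      simp
    rw [h]; exact measurableSet_Ioc

lemma measurable_dyad (n : ℕ) : Measurable (dyad n) := by
  apply Measurable.div _ measurable_const
  exact measurable_from_top.comp (measurable_ceil_nnreal.comp (measurable_id.mul_const _))

lemma tendsto_dyad (x : ℝ≥0) : Tendsto (fun n => dyad n x) atTop (nhds x) := by
  have h0 : Tendsto (fun n : ℕ => x + ((2 : ℝ≥0) ^ n)⁻¹) atTop (nhds x) := by
    have h1 : Tendsto (fun n : ℕ => ((2 : ℝ≥0) ^ n)⁻¹) atTop (nhds 0) := by
      simp_rw [← inv_pow]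
      exact NNReal.tendsto_pow_atTop_nhds_zero_of_lt_one (by rw [NNReal.inv_lt_one_iff] <;> norm_num)
    simpa using tendsto_const_nhds.add h1
  exact tendsto_of_tendsto_of_tendsto_of_le_of_le tendsto_const_nhds h0
    (fun n => le_dyad n x) (fun n => dyad_le n x)

lemma tendsto_eval_dyad {f : ℝ≥0 → ℝ} {x : ℝ≥0}
    (hf : ContinuousWithinAt f (Set.Ici x) x) :
    Tendsto (fun n => f (dyad n x)) atTop (nhds (f x)) :=
  hf.tendsto.comp (tendsto_nhdsWithin_iff.mpr
    ⟨tendsto_dyad x, Filter.Eventually.of_forall fun n => le_dyad n x⟩)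

lemma summable_abs_of_tsum_ofReal_min_ne_top {a : ℕ → ℝ}
    (h : ∑' i, ENNReal.ofReal (min 1 |a i|) ≠ ⊤) :
    Summable fun i => |a i| := by
  have hnn : ∀ i, 0 ≤ min 1 |a i| := fun i => le_min zero_le_one (abs_nonneg _)
  have hs : Summable fun i => min 1 |a i| := by
    have := ENNReal.summable_toReal h
    simpa only [ENNReal.toReal_ofReal (hnn _)] using this
  have hev : ∀ᶠ i in atTop, min 1 |a i| < 1 :=
    hs.tendsto_atTop_zero.eventually_lt_const one_pos
  obtain ⟨N, hN⟩ := hev.exists_forall_of_atTop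
  rw [← summable_nat_add_iff N]
  have := (summable_nat_add_iff (f := fun i => min 1 |a i|) N).2 hs
  refine this.congr fun i => ?_
  have hlt := hN (i + N) (Nat.le_add_left N i)
  rcases le_total 1 |a (i + N)| with hc | hc
  · exact absurd (min_eq_left hc ▸ hlt) (lt_irrefl 1)
  · exact min_eq_right hc

def expDen : ℝ → ℝ≥0∞ := fun b =>
  (Set.Ioi (0:ℝ)).indicator (fun b => ENNReal.ofReal (Real.exp (-b))) b

def gammaDen (i : ℕ) : ℝ → ℝ≥0∞ := fun s =>
  (Set.Ioi (0:ℝ)).indicator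
    (fun s => ENNReal.ofReal (s ^ i * Real.exp (-s) / (Nat.factorial i))) s

lemma measurable_expDen : Measurable expDen :=
  ((measurable_id.neg.exp).ennreal_ofReal).indicator measurableSet_Ioi

lemma measurable_gammaDen (i : ℕ) : Measurable (gammaDen i) := by
  apply Measurable.indicator _ measurableSet_Ioi
  exact (((measurable_id.pow_const i).mul measurable_id.neg.exp).div_const _).ennreal_ofReal

lemma gammaDen_zero : gammaDen 0 = expDen := by
  funext s
  simp [gammaDen, expDen]

lemma gammaDen_ne_top (i : ℕ) (s : ℝ) : gammaDen i s ≠ ⊤ := by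
  unfold gammaDen
  by_cases hs : s ∈ Set.Ioi (0:ℝ) <;> simp [hs]

/-- The law of a rate-one exponential random variable. -/
lemma exp_law {Ω : Type*} [MeasurableSpace Ω] (P : Measure Ω) [IsProbabilityMeasure P]
    {X : Ω → ℝ} (hX : Measurable X)
    (hexp : ∀ t : ℝ, 0 ≤ t → P {ω | t < X ω} = ENNReal.ofReal (Real.exp (-t)))
    (g : ℝ → ℝ≥0∞) (hg : Measurable g) :
    ∫⁻ ω, g (X ω) ∂P = ∫⁻ b, g b * expDen b := by
  have hmap : Measure.map X P = volume.withDensity expDen := by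
    have : IsProbabilityMeasure (Measure.map X P) :=
      Measure.isProbabilityMeasure_map hX.aemeasurable
    apply Measure.ext_of_Iic
    intro a
    have hL : Measure.map X P (Set.Iic a) = P {ω | X ω ≤ a} := by
      rw [Measure.map_apply hX measurableSet_Iic]; rfl
    have hR : volume.withDensity expDen (Set.Iic a)
        = ∫⁻ b in Set.Ioc (0:ℝ) a, ENNReal.ofReal (Real.exp (-b)) := by
      rw [withDensity_apply _ measurableSet_Iic]
      unfold expDen
      rw [lintegral_indicator measurableSet_Ioi, Measure.restrict_restrict measurableSet_Ioi,
        Set.Ioi_inter_Iic]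
    rcases lt_or_ge a 0 with ha | ha
    · have h1 : P {ω | X ω ≤ a} = 0 := by
        have hsub : {ω | X ω ≤ a} ⊆ {ω | 0 < X ω}ᶜ := by
          intro ω hω
          simp only [Set.mem_compl_iff, Set.mem_setOf_eq, not_lt]
          exact le_trans hω ha.le
        have h2 : P {ω | 0 < X ω}ᶜ = 0 := by
          have hms : MeasurableSet {ω | (0:ℝ) < X ω} := hX measurableSet_Ioi
          rw [measure_compl hms (measure_ne_top _ _)]
          rw [hexp 0 le_rfl]
          simp
        exact measure_mono_null hsub h2
      rw [hL, h1, hR, Set.Ioc_eq_empty (not_lt.mpr ha.le)]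
      simp
    · have h1 : {ω | X ω ≤ a} = {ω | a < X ω}ᶜ := by
        ext ω; simp [not_lt]
      have hms : MeasurableSet {ω | a < X ω} := hX measurableSet_Ioi
      rw [hL, h1, measure_compl hms (measure_ne_top _ _), hexp a ha,
        measure_univ, hR]
      have hInt : IntegrableOn (fun b => Real.exp (-b)) (Set.Ioc (0:ℝ) a) volume :=
        (Real.continuous_exp.comp continuous_neg).integrableOn_Ioc
      rw [← ofReal_integral_eq_lintegral_ofReal hInt
        (Filter.Eventually.of_forall fun x => (Real.exp_pos _).le)]
      have : ∫ b in Set.Ioc (0:ℝ) a, Real.exp (-b) = 1 - Real.exp (-a) := by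
        rw [← intervalIntegral.integral_of_le ha]
        have := intervalIntegral.integral_comp_neg (a := 0) (b := a) (fun x => Real.exp x)
        rw [this, integral_exp]
        simp
      rw [this, ENNReal.ofReal_sub 1 (Real.exp_pos _).le]
      simp
  calc ∫⁻ ω, g (X ω) ∂P = ∫⁻ b, g b ∂(Measure.map X P) := (lintegral_map hg hX).symm
    _ = ∫⁻ b, g b ∂(volume.withDensity expDen) := by rw [hmap]
    _ = ∫⁻ b, expDen b * g b := by
        rw [lintegral_withDensity_eq_lintegral_mul _ measurable_expDen hg]; rfl
    _ = ∫⁻ b, g b * expDen b := by exact lintegral_congr fun b => mul_comm _ _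

/-- Convolution identity for the gamma densities. -/
lemma gammaDen_conv (i : ℕ) (s : ℝ) :
    ∫⁻ x, expDen (s - x) * gammaDen i x = gammaDen (i + 1) s := by
  have hpt : ∀ x, expDen (s - x) * gammaDen i x
      = (Set.Ioo (0:ℝ) s).indicator
          (fun x => ENNReal.ofReal (x ^ i * Real.exp (-s) / (Nat.factorial i))) x := by
    intro x
    unfold expDen gammaDen
    by_cases hx : x ∈ Set.Ioi (0:ℝ)
    · by_cases hxs : x < s
      · have h1 : s - x ∈ Set.Ioi (0:ℝ) := by simp [Set.mem_Ioi]; linarith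
        have h2 : x ∈ Set.Ioo (0:ℝ) s := ⟨hx, hxs⟩
        rw [Set.indicator_of_mem h1, Set.indicator_of_mem hx, Set.indicator_of_mem h2,
          ← ENNReal.ofReal_mul (Real.exp_pos _).le]
        congr 1
        rw [div_eq_mul_inv, div_eq_mul_inv, ← mul_assoc, ← mul_assoc,
          mul_comm (Real.exp (-(s-x))) (x ^ i), mul_assoc (x ^ i), ← Real.exp_add]
        congr 2
        ring
      · have h1 : s - x ∉ Set.Ioi (0:ℝ) := by simp [Set.mem_Ioi]; linarith
        have h2 : x ∉ Set.Ioo (0:ℝ) s := fun hc => hxs hc.2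
        rw [Set.indicator_of_notMem h1, Set.indicator_of_notMem h2, zero_mul]
    · have h2 : x ∉ Set.Ioo (0:ℝ) s := fun hc => hx hc.1
      rw [Set.indicator_of_notMem hx, Set.indicator_of_notMem h2, mul_zero]
  simp_rw [hpt]
  rw [lintegral_indicator measurableSet_Ioo]
  by_cases hs : 0 < s
  · have hIoc : volume.restrict (Set.Ioo (0:ℝ) s) = volume.restrict (Set.Ioc (0:ℝ) s) :=
      Measure.restrict_congr_set Ioo_ae_eq_Ioc
    rw [hIoc]
    have hInt : IntegrableOn (fun x : ℝ => x ^ i * Real.exp (-s) / (Nat.factorial i))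
        (Set.Ioc (0:ℝ) s) volume := by
      apply Continuous.integrableOn_Ioc
      continuity
    rw [← ofReal_integral_eq_lintegral_ofReal hInt ((ae_restrict_iff' measurableSet_Ioc).2
      (Filter.Eventually.of_forall fun x hx =>
        div_nonneg (mul_nonneg (pow_nonneg hx.1.le i) (Real.exp_pos _).le)
          (Nat.cast_nonneg _)))]
    have hval : ∫ x in Set.Ioc (0:ℝ) s, x ^ i * Real.exp (-s) / (Nat.factorial i)
        = s ^ (i+1) * Real.exp (-s) / (Nat.factorial (i+1)) := by
      simp_rw [mul_div_assoc]
      rw [MeasureTheory.integral_mul_const, ← intervalIntegral.integral_of_le hs.le,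
        integral_pow]
      rw [Nat.factorial_succ]
      have h1 : ((i:ℝ) + 1) ≠ 0 := by positivity
      have h2 : (Nat.factorial i : ℝ) ≠ 0 := Nat.cast_ne_zero.mpr (Nat.factorial_ne_zero i)
      push_cast
      field_simp
      simp
    rw [hval]
    unfold gammaDen
    rw [Set.indicator_of_mem (by exact hs)]
  · have h0 : Set.Ioo (0:ℝ) s = ∅ := Set.Ioo_eq_empty hs
    rw [h0]
    simp only [Measure.restrict_empty, lintegral_zero_measure]
    unfold gammaDen
    rw [Set.indicator_of_notMem (by simpa using hs)]

lemma gamma_law {Ω : Type*} [MeasurableSpace Ω] (P : Measure Ω) [IsProbabilityMeasure P]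
    (E : ℕ → Ω → ℝ) (hEmeas : ∀ i, Measurable (E i))
    (hexp : ∀ i, ∀ t : ℝ, 0 ≤ t → P {ω | t < E i ω} = ENNReal.ofReal (Real.exp (-t)))
    (hind : ∀ i, IndepFun (gammaPt E i) (E (i+1)) P) :
    ∀ i, ∀ g : ℝ → ℝ≥0∞, Measurable g →
      ∫⁻ ω, g (gammaPt E i ω) ∂P = ∫⁻ s, g s * gammaDen i s := by
  intro i
  induction i with
  | zero =>
    intro g hg
    have h0 : ∀ ω, gammaPt E 0 ω = E 0 ω := fun ω => by
      show ∑ j ∈ Finset.range 1, E j ω = E 0 ω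
      simp
    simp_rw [h0, gammaDen_zero]
    exact exp_law P (hEmeas 0) (hexp 0) g hg
  | succ i ih =>
    intro g hg
    have hΓ : Measurable (gammaPt E i) := Finset.measurable_sum _ (fun j _ => hEmeas j)
    have hX : Measurable (E (i+1)) := hEmeas (i+1)
    have hsum : ∀ ω, gammaPt E (i+1) ω = gammaPt E i ω + E (i+1) ω := fun ω =>
      Finset.sum_range_succ _ _
    simp_rw [hsum]
    have hpairmeas : Measurable fun ω => (gammaPt E i ω, E (i+1) ω) := hΓ.prodMk hX
    have haddmeas : Measurable fun p : ℝ × ℝ => g (p.1 + p.2) :=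
      hg.comp (measurable_fst.add measurable_snd)
    have hmapprod : (Measure.map (fun ω => (gammaPt E i ω, E (i+1) ω)) P)
        = (Measure.map (gammaPt E i) P).prod (Measure.map (E (i+1)) P) :=
      (indepFun_iff_map_prod_eq_prod_map_map hΓ.aemeasurable hX.aemeasurable).1 (hind i)
    have hP2 : IsProbabilityMeasure (Measure.map (E (i+1)) P) :=
      Measure.isProbabilityMeasure_map hX.aemeasurable
    have hP1 : IsProbabilityMeasure (Measure.map (gammaPt E i) P) :=
      Measure.isProbabilityMeasure_map hΓ.aemeasurable
    have hGmeas : Measurable fun x => ∫⁻ b, g (x + b) * expDen b := by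
      apply Measurable.lintegral_prod_right
      exact (hg.comp (measurable_fst.add measurable_snd)).mul
        (measurable_expDen.comp measurable_snd)
    have key : ∫⁻ x, (∫⁻ b, g (x + b) * expDen b) * gammaDen i x
        = ∫⁻ s, g s * gammaDen (i + 1) s := by
      have hA : ∀ x : ℝ, (∫⁻ b, g (x + b) * expDen b) * gammaDen i x
          = ∫⁻ s, g s * expDen (s - x) * gammaDen i x := by
        intro x
        have hK : Measurable fun s => g s * expDen (s - x) :=
          hg.mul (measurable_expDen.comp (measurable_id.sub measurable_const))
        have htrans : ∫⁻ b, g (x + b) * expDen b = ∫⁻ s, g s * expDen (s - x) := by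
          have h := (measurePreserving_add_left volume x).lintegral_comp hK
          simp only [add_sub_cancel_left] at h
          exact h
        rw [htrans, ← lintegral_mul_const _ hK]
      simp_rw [hA]
      rw [lintegral_lintegral_swap]
      · apply lintegral_congr
        intro s
        simp_rw [mul_assoc]
        have hmeas2 : Measurable fun x : ℝ => expDen (s - x) * gammaDen i x := by
          apply Measurable.mul
          · exact measurable_expDen.comp (measurable_const.sub measurable_id)
          · exact measurable_gammaDen i
        rw [lintegral_const_mul _ hmeas2, gammaDen_conv]
      · exact (((hg.comp measurable_snd).mul (measurable_expDen.comp
          (measurable_snd.sub measurable_fst))).mul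
          ((measurable_gammaDen i).comp measurable_fst)).aemeasurable
    calc ∫⁻ ω, g (gammaPt E i ω + E (i+1) ω) ∂P
        = ∫⁻ p : ℝ × ℝ, g (p.1 + p.2)
            ∂((Measure.map (gammaPt E i) P).prod (Measure.map (E (i+1)) P)) := by
          rw [← hmapprod, lintegral_map haddmeas hpairmeas]
      _ = ∫⁻ x, ∫⁻ y, g (x + y) ∂(Measure.map (E (i+1)) P) ∂(Measure.map (gammaPt E i) P) :=
          lintegral_prod _ haddmeas.aemeasurable
      _ = ∫⁻ x, (∫⁻ b, g (x + b) * expDen b) ∂(Measure.map (gammaPt E i) P) := by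
          apply lintegral_congr
          intro x
          have hgx : Measurable fun y : ℝ => g (x + y) :=
            hg.comp (measurable_const.add measurable_id)
          rw [lintegral_map hgx hX]
          exact exp_law P hX (hexp (i+1)) (fun b => g (x + b)) hgx
      _ = ∫⁻ ω, (∫⁻ b, g (gammaPt E i ω + b) * expDen b) ∂P := lintegral_map hGmeas hΓ
      _ = ∫⁻ x, (∫⁻ b, g (x + b) * expDen b) * gammaDen i x := ih _ hGmeas
      _ = ∫⁻ s, g s * gammaDen (i + 1) s := key

lemma gammaDen_tsum (s : ℝ) : ∑' i, gammaDen i s = (Set.Ioi (0:ℝ)).indicator 1 s := by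
  by_cases hs : s ∈ Set.Ioi (0:ℝ)
  · have hnn : ∀ i : ℕ, 0 ≤ s ^ i * Real.exp (-s) / (Nat.factorial i) := fun i =>
      div_nonneg (mul_nonneg (pow_nonneg (le_of_lt hs) i) (Real.exp_pos _).le)
        (Nat.cast_nonneg _)
    have hsumm : Summable fun i : ℕ => s ^ i * Real.exp (-s) / (Nat.factorial i) := by
      apply Summable.congr ((Real.summable_pow_div_factorial s).mul_right (Real.exp (-s)))
      intro i
      ring
    have htsum : ∑' i : ℕ, s ^ i * Real.exp (-s) / (Nat.factorial i) = 1 := by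
      have h1 : ∀ i : ℕ, s ^ i * Real.exp (-s) / (Nat.factorial i)
          = s ^ i / (Nat.factorial i) * Real.exp (-s) := fun i => by ring
      rw [tsum_congr h1, tsum_mul_right]
      have h2 : ∑' i : ℕ, s ^ i / (Nat.factorial i : ℝ) = Real.exp s := by
        rw [Real.exp_eq_exp_ℝ, NormedSpace.exp_eq_tsum_div]
      rw [h2, ← Real.exp_add]
      simp
    simp only [gammaDen, Set.indicator_of_mem hs]
    rw [← ENNReal.ofReal_tsum_of_nonneg hnn hsumm, htsum]
    simp
  · simp only [gammaDen, Set.indicator_of_notMem hs]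
    simp

lemma lintegral_image_eq_lintegral_abs_deriv_mul' {s : Set ℝ} {f f' : ℝ → ℝ}
    (hs : MeasurableSet s) (hf' : ∀ x ∈ s, HasDerivWithinAt f (f' x) s x)
    (hf : Set.InjOn f s) (g : ℝ → ℝ≥0∞) :
    ∫⁻ x in f '' s, g x = ∫⁻ x in s, ENNReal.ofReal |f' x| * g (f x) := by
  simpa only [ContinuousLinearMap.det_toSpanSingleton] using
    MeasureTheory.lintegral_image_eq_lintegral_abs_det_fderiv_mul volume hs
      (fun x hx => (hf' x hx).hasFDerivWithinAt) hf g

end AuxST6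

/-- Let `(εᵢ)` be i.i.d. copies of a random element of `D'₀`, independent of
the points `(Γᵢ)` of a unit-intensity Poisson process on `[0,∞)` (given by i.i.d. rate-one
exponential interarrival times `Eⱼ`). If `E ∫₀^∞ min(1,|ε(t)|) t⁻² dt < ∞`, then for every
`t ≥ 0` the series `∑ᵢ εᵢ(Γᵢ⁻¹ t)` converges absolutely almost surely. -/
theorem statement6 {Ω : Type*} [MeasurableSpace Ω] (P : Measure Ω) [IsProbabilityMeasure P]
    (E : ℕ → Ω → ℝ) (eps : ℕ → Ω → ℝ≥0 → ℝ)
    (hEmeas : ∀ i, Measurable (E i)) (hepsmeas : ∀ i, Measurable (eps i))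
    -- all the random elements `E 0, E 1, …, ε 0, ε 1, …` are jointly independent
    (hindep : iIndepFun (m := fun _ : ℕ ⊕ ℕ => inferInstance)
      (Sum.elim (fun j => fun ω => ((E j ω, 0) : ℝ × (ℝ≥0 → ℝ)))
        (fun j => fun ω => ((0, eps j ω) : ℝ × (ℝ≥0 → ℝ)))) P)
    -- the `E j` are rate-one exponential random variables
    (hexp : ∀ i, ∀ t : ℝ, 0 ≤ t → P {ω | t < E i ω} = ENNReal.ofReal (Real.exp (-t)))
    -- the `ε i` are identically distributed
    (hiid : ∀ i, Measure.map (eps i) P = Measure.map (eps 0) P)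
    -- each `ε i` takes values in `D'₀` a.s.
    (hD : ∀ i, ∀ᵐ ω ∂P, Cadlag (eps i ω) ∧ eps i ω 0 = 0 ∧ eps i ω ≠ 0)
    -- `E ∫₀^∞ min(1, |ε(t)|) t⁻² dt < ∞`
    (hmom : ∫⁻ ω, (∫⁻ t in Set.Ioi (0 : ℝ),
        ENNReal.ofReal (min 1 |eps 0 ω t.toNNReal| / t ^ 2)) ∂P ≠ ⊤) :
    ∀ t : ℝ≥0, ∀ᵐ ω ∂P,
      Summable fun i : ℕ => |eps i ω (((gammaPt E i ω).toNNReal)⁻¹ * t)| := by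
  intro t
  classical
  have hΓmeas : ∀ i, Measurable (gammaPt E i) := fun i =>
    Finset.measurable_sum _ fun j _ => hEmeas j
  by_cases ht : t = 0
  · subst ht
    have hall : ∀ᵐ ω ∂P, ∀ i : ℕ, eps i ω 0 = 0 :=
      ae_all_iff.mpr fun i => (hD i).mono fun ω h => h.2.1
    filter_upwards [hall] with ω hω
    have hz : (fun i : ℕ => |eps i ω (((gammaPt E i ω).toNNReal)⁻¹ * 0)|)
        = fun _ => (0:ℝ) := by
      funext i; simp [hω i]
    rw [hz]; exact summable_zero
  -- main case : t ≠ 0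
  have htpos : (0:ℝ) < (t:ℝ) := by
    have : (0:ℝ≥0) < t := zero_lt_iff.mpr ht
    exact_mod_cast this
  -- notation
  set FF : ℕ ⊕ ℕ → Ω → ℝ × (ℝ≥0 → ℝ) :=
    Sum.elim (fun j => fun ω => ((E j ω, 0) : ℝ × (ℝ≥0 → ℝ)))
      (fun j => fun ω => ((0, eps j ω) : ℝ × (ℝ≥0 → ℝ))) with hFF
  have hFFmeas : ∀ j, Measurable (FF j) := by
    rintro (j | j)
    · exact (hEmeas j).prodMk measurable_const
    · exact measurable_const.prodMk (hepsmeas j)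
  -- the two independence statements we need
  have hInd1 : ∀ i, IndepFun (gammaPt E i) (eps i) P := by
    intro i
    set S : Finset (ℕ ⊕ ℕ) := (Finset.range (i+1)).image Sum.inl with hS
    set T : Finset (ℕ ⊕ ℕ) := {Sum.inr i} with hT
    have hST : Disjoint S T := by
      rw [Finset.disjoint_left]
      rintro a haS haT
      rw [hS, Finset.mem_image] at haS
      obtain ⟨j, _, rfl⟩ := haS
      rw [hT, Finset.mem_singleton] at haT
      exact Sum.inl_ne_inr haT
    have base := hindep.indepFun_finset S T hST hFFmeas
    set φ : ({x // x ∈ S} → ℝ × (ℝ≥0 → ℝ)) → ℝ := fun v => ∑ j ∈ S.attach, (v j).1 with hφ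
    have hφm : Measurable φ :=
      Finset.measurable_sum _ fun j _ => measurable_fst.comp (measurable_pi_apply j)
    have hTmem : Sum.inr i ∈ T := Finset.mem_singleton_self _
    set ψ : ({x // x ∈ T} → ℝ × (ℝ≥0 → ℝ)) → (ℝ≥0 → ℝ) :=
      fun v => (v ⟨Sum.inr i, hTmem⟩).2 with hψ
    have hψm : Measurable ψ := measurable_snd.comp (measurable_pi_apply _)
    have hcomp := base.comp hφm hψm
    have h1 : (φ ∘ fun ω (j : {x // x ∈ S}) => FF j ω) = gammaPt E i := by
      funext ω
      show ∑ j ∈ S.attach, (FF j ω).1 = gammaPt E i ω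
      rw [Finset.sum_attach S (fun j => (FF j ω).1), hS,
        Finset.sum_image (fun x _ y _ h => Sum.inl.inj h)]
      rfl
    have h2 : (ψ ∘ fun ω (j : {x // x ∈ T}) => FF j ω) = eps i := rfl
    rwa [h1, h2] at hcomp
  have hInd2 : ∀ i, IndepFun (gammaPt E i) (E (i+1)) P := by
    intro i
    set S : Finset (ℕ ⊕ ℕ) := (Finset.range (i+1)).image Sum.inl with hS
    set T : Finset (ℕ ⊕ ℕ) := {Sum.inl (i+1)} with hT
    have hST : Disjoint S T := by
      rw [Finset.disjoint_left]
      rintro a haS haT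
      rw [hS, Finset.mem_image] at haS
      obtain ⟨j, hj, rfl⟩ := haS
      rw [hT, Finset.mem_singleton] at haT
      have : j = i + 1 := Sum.inl.inj haT
      rw [Finset.mem_range] at hj
      omega
    have base := hindep.indepFun_finset S T hST hFFmeas
    set φ : ({x // x ∈ S} → ℝ × (ℝ≥0 → ℝ)) → ℝ := fun v => ∑ j ∈ S.attach, (v j).1 with hφ
    have hφm : Measurable φ :=
      Finset.measurable_sum _ fun j _ => measurable_fst.comp (measurable_pi_apply j)
    have hTmem : Sum.inl (i+1) ∈ T := Finset.mem_singleton_self _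
    set ψ : ({x // x ∈ T} → ℝ × (ℝ≥0 → ℝ)) → ℝ := fun v => (v ⟨Sum.inl (i+1), hTmem⟩).1 with hψ
    have hψm : Measurable ψ := measurable_fst.comp (measurable_pi_apply _)
    have hcomp := base.comp hφm hψm
    have h1 : (φ ∘ fun ω (j : {x // x ∈ S}) => FF j ω) = gammaPt E i := by
      funext ω
      show ∑ j ∈ S.attach, (FF j ω).1 = gammaPt E i ω
      rw [Finset.sum_attach S (fun j => (FF j ω).1), hS,
        Finset.sum_image (fun x _ y _ h => Sum.inl.inj h)]
      rfl
    have h2 : (ψ ∘ fun ω (j : {x // x ∈ T}) => FF j ω) = E (i+1) := rfl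
    rwa [h1, h2] at hcomp
  -- evaluation random variables
  set u : ℕ → Ω → ℝ≥0 := fun i ω => ((gammaPt E i ω).toNNReal)⁻¹ * t with hu
  have humeas : ∀ i, Measurable (u i) := fun i =>
    ((measurable_real_toNNReal.comp (hΓmeas i)).inv).mul_const t
  have hF : ∀ i (q : ℝ≥0), Measurable fun ω => ENNReal.ofReal (min 1 |eps i ω q|) := by
    intro i q
    have h1 : Measurable fun ω => eps i ω q := (measurable_pi_apply q).comp (hepsmeas i)
    exact (measurable_const.min h1.abs).ennreal_ofReal
  set X : ℕ → Ω → ℝ≥0∞ := fun i ω => ENNReal.ofReal (min 1 |eps i ω (u i ω)|) with hX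
  set Y : ℕ → ℕ → Ω → ℝ≥0∞ :=
    fun i n ω => ENNReal.ofReal (min 1 |eps i ω (dyad n (u i ω))|) with hY
  have hrange : ∀ i n, (Set.range fun ω => dyad n (u i ω)).Countable := by
    intro i n
    apply Set.Countable.mono _ (Set.countable_range fun k : ℕ => (k : ℝ≥0) / 2 ^ n)
    rintro x ⟨ω, rfl⟩
    exact dyad_mem_range n _
  have hYmeas : ∀ i n, Measurable (Y i n) := by
    intro i n
    apply measurable_eval_countable ((measurable_dyad n).comp (humeas i)) (hrange i n)
      (F := fun ω q => ENNReal.ofReal (min 1 |eps i ω q|))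
    intro q
    exact hF i q
  -- the mean function m
  set m : ℝ≥0 → ℝ≥0∞ := fun q => ∫⁻ ω, ENNReal.ofReal (min 1 |eps 0 ω q|) ∂P with hm
  have hmle1 : ∀ q, m q ≤ 1 := by
    intro q
    rw [hm]
    calc ∫⁻ ω, ENNReal.ofReal (min 1 |eps 0 ω q|) ∂P
        ≤ ∫⁻ _, 1 ∂P := lintegral_mono fun ω => ENNReal.ofReal_le_one.2 (min_le_left _ _)
      _ = 1 := by simp
  have hcont : Continuous fun z : ℝ => ENNReal.ofReal (min 1 |z|) :=
    ENNReal.continuous_ofReal.comp (continuous_const.min continuous_abs)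
  have mRC : ∀ x : ℝ≥0, Filter.Tendsto (fun n => m (dyad n x)) Filter.atTop (nhds (m x)) := by
    intro x
    apply tendsto_lintegral_of_dominated_convergence (fun _ => (1:ℝ≥0∞))
      (fun n => hF 0 (dyad n x))
      (fun n => Filter.Eventually.of_forall fun ω =>
        ENNReal.ofReal_le_one.2 (min_le_left _ _))
      (by simp)
    filter_upwards [hD 0] with ω hω
    exact (hcont.tendsto _).comp (tendsto_eval_dyad (hω.1.1 x))
  have hmdyadmeas : ∀ n, Measurable fun x => m (dyad n x) := by
    intro n
    apply measurable_eval_countable (measurable_dyad n)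
      (Set.Countable.mono (by rintro x ⟨y, rfl⟩; exact dyad_mem_range n _)
        (Set.countable_range fun k : ℕ => (k : ℝ≥0) / 2 ^ n))
      (F := fun _ q => m q)
    exact fun q => measurable_const
  have hmmeas : Measurable m := by
    have heq : m = fun x => Filter.liminf (fun n => m (dyad n x)) Filter.atTop := by
      funext x
      exact ((mRC x).liminf_eq).symm
    rw [heq]
    exact Measurable.liminf hmdyadmeas
  have miid : ∀ i (q : ℝ≥0), ∫⁻ ω, ENNReal.ofReal (min 1 |eps i ω q|) ∂P = m q := by
    intro i q
    have hev : Measurable fun f : ℝ≥0 → ℝ => ENNReal.ofReal (min 1 |f q|) :=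
      (measurable_const.min (measurable_pi_apply q).abs).ennreal_ofReal
    rw [hm]
    calc ∫⁻ ω, ENNReal.ofReal (min 1 |eps i ω q|) ∂P
        = ∫⁻ f, ENNReal.ofReal (min 1 |f q|) ∂(Measure.map (eps i) P) :=
          (lintegral_map hev (hepsmeas i)).symm
      _ = ∫⁻ f, ENNReal.ofReal (min 1 |f q|) ∂(Measure.map (eps 0) P) := by rw [hiid i]
      _ = ∫⁻ ω, ENNReal.ofReal (min 1 |eps 0 ω q|) ∂P := lintegral_map hev (hepsmeas 0)
  -- key: E[Y i n] = E[m (dyad n (u i ·))]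
  have hYint : ∀ i n, ∫⁻ ω, Y i n ω ∂P = ∫⁻ ω, m (dyad n (u i ω)) ∂P := by
    intro i n
    set q : ℕ → ℝ≥0 := fun k => (k : ℝ≥0) / 2 ^ n with hq
    have hqinj : Function.Injective q := by
      intro a b hab
      have h2 : (a:ℝ≥0) = b := by
        have h3 := congrArg (fun z : ℝ≥0 => z * 2 ^ n) hab
        simpa [hq, div_mul_cancel₀ _ (two_pow_ne n)] using h3
      exact_mod_cast h2
    set B : ℕ → Set ℝ := fun k => {s : ℝ | dyad n ((s.toNNReal)⁻¹ * t) = q k} with hB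
    have hBmeas : ∀ k, MeasurableSet (B k) := by
      intro k
      exact ((measurable_dyad n).comp ((measurable_real_toNNReal.inv).mul_const t))
        (measurableSet_singleton (q k))
    set A : ℕ → Set Ω := fun k => gammaPt E i ⁻¹' (B k) with hA
    have hAmeas : ∀ k, MeasurableSet (A k) := fun k => (hΓmeas i) (hBmeas k)
    have hAmem : ∀ ω k, ω ∈ A k ↔ dyad n (u i ω) = q k := by
      intro ω k
      rfl
    have hk0 : ∀ ω, dyad n (u i ω) = q (Nat.ceil ((u i ω) * 2 ^ n)) := fun ω => rfl
    have claim1 : ∀ ω, Y i n ω = ∑' k,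
        (A k).indicator (fun ω' => ENNReal.ofReal (min 1 |eps i ω' (q k)|)) ω := by
      intro ω
      rw [tsum_eq_single (Nat.ceil ((u i ω) * 2 ^ n)) ?side]
      case side =>
        intro k hk
        apply Set.indicator_of_notMem
        rw [hAmem]
        intro hc
        exact hk (hqinj (by rw [← hc, hk0 ω]))
      rw [Set.indicator_of_mem (by rw [hAmem]; exact hk0 ω)]
      rfl
    have claim2 : ∀ ω, m (dyad n (u i ω)) = ∑' k,
        (A k).indicator (fun _ => m (q k)) ω := by
      intro ω
      rw [tsum_eq_single (Nat.ceil ((u i ω) * 2 ^ n)) ?side2]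
      case side2 =>
        intro k hk
        apply Set.indicator_of_notMem
        rw [hAmem]
        intro hc
        exact hk (hqinj (by rw [← hc, hk0 ω]))
      rw [Set.indicator_of_mem (by rw [hAmem]; exact hk0 ω)]
      rw [hk0 ω]
    have hterm : ∀ k, ∫⁻ ω, (A k).indicator
        (fun ω' => ENNReal.ofReal (min 1 |eps i ω' (q k)|)) ω ∂P = P (A k) * m (q k) := by
      intro k
      have hprod : ∀ ω, (A k).indicator
          (fun ω' => ENNReal.ofReal (min 1 |eps i ω' (q k)|)) ω
          = ((B k).indicator (fun _ => (1:ℝ≥0∞)) (gammaPt E i ω))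
            * ENNReal.ofReal (min 1 |eps i ω (q k)|) := by
        intro ω
        by_cases hωk : ω ∈ A k
        · rw [Set.indicator_of_mem hωk,
            Set.indicator_of_mem (show gammaPt E i ω ∈ B k from hωk), one_mul]
        · rw [Set.indicator_of_notMem hωk,
            Set.indicator_of_notMem (show gammaPt E i ω ∉ B k from hωk), zero_mul]
      have hf1 : Measurable fun s : ℝ => (B k).indicator (fun _ => (1:ℝ≥0∞)) s :=
        measurable_const.indicator (hBmeas k)
      have hf2 : Measurable fun f : ℝ≥0 → ℝ => ENNReal.ofReal (min 1 |f (q k)|) :=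
        (measurable_const.min (measurable_pi_apply (q k)).abs).ennreal_ofReal
      have hIk : IndepFun (fun ω => (B k).indicator (fun _ => (1:ℝ≥0∞)) (gammaPt E i ω))
          (fun ω => ENNReal.ofReal (min 1 |eps i ω (q k)|)) P := (hInd1 i).comp hf1 hf2
      have hmf : Measurable fun ω => (B k).indicator (fun _ => (1:ℝ≥0∞)) (gammaPt E i ω) :=
        hf1.comp (hΓmeas i)
      have hBA : ∀ ω, (B k).indicator (fun _ => (1:ℝ≥0∞)) (gammaPt E i ω)
          = (A k).indicator (fun _ => (1:ℝ≥0∞)) ω := by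
        intro ω
        by_cases hωk : ω ∈ A k
        · rw [Set.indicator_of_mem (show gammaPt E i ω ∈ B k from hωk),
            Set.indicator_of_mem hωk]
        · rw [Set.indicator_of_notMem (show gammaPt E i ω ∉ B k from hωk),
            Set.indicator_of_notMem hωk]
      calc ∫⁻ ω, (A k).indicator
            (fun ω' => ENNReal.ofReal (min 1 |eps i ω' (q k)|)) ω ∂P
          = ∫⁻ ω, ((fun ω => (B k).indicator (fun _ => (1:ℝ≥0∞)) (gammaPt E i ω))
              * fun ω => ENNReal.ofReal (min 1 |eps i ω (q k)|)) ω ∂P := by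
            apply lintegral_congr
            intro ω
            rw [Pi.mul_apply]
            exact hprod ω
        _ = (∫⁻ ω, (B k).indicator (fun _ => (1:ℝ≥0∞)) (gammaPt E i ω) ∂P)
            * ∫⁻ ω, ENNReal.ofReal (min 1 |eps i ω (q k)|) ∂P :=
            lintegral_mul_eq_lintegral_mul_lintegral_of_indepFun hmf (hF i (q k)) hIk
        _ = P (A k) * m (q k) := by
            rw [miid i (q k)]
            congr 1
            rw [lintegral_congr hBA]
            exact lintegral_indicator_one (hAmeas k)
    have hterm2 : ∀ k, ∫⁻ ω, (A k).indicator (fun _ => m (q k)) ω ∂P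
        = P (A k) * m (q k) := by
      intro k
      rw [lintegral_indicator_const (hAmeas k), mul_comm]
    calc ∫⁻ ω, Y i n ω ∂P
        = ∫⁻ ω, ∑' k, (A k).indicator
            (fun ω' => ENNReal.ofReal (min 1 |eps i ω' (q k)|)) ω ∂P := by
          apply lintegral_congr claim1
      _ = ∑' k, ∫⁻ ω, (A k).indicator
            (fun ω' => ENNReal.ofReal (min 1 |eps i ω' (q k)|)) ω ∂P :=
          lintegral_tsum fun k => ((hF i (q k)).indicator (hAmeas k)).aemeasurable
      _ = ∑' k, P (A k) * m (q k) := tsum_congr hterm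
      _ = ∑' k, ∫⁻ ω, (A k).indicator (fun _ => m (q k)) ω ∂P :=
          (tsum_congr hterm2).symm
      _ = ∫⁻ ω, ∑' k, (A k).indicator (fun _ => m (q k)) ω ∂P :=
          (lintegral_tsum fun k =>
            ((measurable_const (a := m (q k))).indicator (hAmeas k)).aemeasurable).symm
      _ = ∫⁻ ω, m (dyad n (u i ω)) ∂P := by
          apply lintegral_congr
          intro ω
          exact (claim2 ω).symm
  -- a.e. limit description of X i
  have hXliminf : ∀ i, X i =ᵐ[P] fun ω => Filter.liminf (fun n => Y i n ω) Filter.atTop := by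
    intro i
    filter_upwards [hD i] with ω hω
    have htd : Filter.Tendsto (fun n => Y i n ω) Filter.atTop (nhds (X i ω)) :=
      (hcont.tendsto _).comp (tendsto_eval_dyad (hω.1.1 (u i ω)))
    exact htd.liminf_eq.symm
  have hXaem : ∀ i, AEMeasurable (X i) P := fun i =>
    ((Measurable.liminf (fun n => hYmeas i n)).aemeasurable).congr (hXliminf i).symm
  have hmumeas : ∀ i n, Measurable fun ω => m (dyad n (u i ω)) := by
    intro i n
    apply measurable_eval_countable ((measurable_dyad n).comp (humeas i)) (hrange i n)
      (F := fun _ q => m q)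
    exact fun q => measurable_const
  -- E[X i] ≤ E[m (u i ·)]
  have hXle : ∀ i, ∫⁻ ω, X i ω ∂P ≤ ∫⁻ ω, m (u i ω) ∂P := by
    intro i
    have hDCT : Filter.Tendsto (fun n => ∫⁻ ω, m (dyad n (u i ω)) ∂P) Filter.atTop
        (nhds (∫⁻ ω, m (u i ω) ∂P)) := by
      apply tendsto_lintegral_of_dominated_convergence (fun _ => (1:ℝ≥0∞))
        (hmumeas i)
        (fun n => Filter.Eventually.of_forall fun ω => hmle1 _)
        (by simp)
      exact Filter.Eventually.of_forall fun ω => mRC (u i ω)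
    calc ∫⁻ ω, X i ω ∂P
        = ∫⁻ ω, Filter.liminf (fun n => Y i n ω) Filter.atTop ∂P :=
          lintegral_congr_ae (hXliminf i)
      _ ≤ Filter.liminf (fun n => ∫⁻ ω, Y i n ω ∂P) Filter.atTop :=
          lintegral_liminf_le fun n => hYmeas i n
      _ = Filter.liminf (fun n => ∫⁻ ω, m (dyad n (u i ω)) ∂P) Filter.atTop := by
          congr 1
          funext n
          exact hYint i n
      _ = ∫⁻ ω, m (u i ω) ∂P := hDCT.liminf_eq
  -- gamma density computation
  set h : ℝ → ℝ≥0∞ := fun s => m ((s.toNNReal)⁻¹ * t) with hh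
  have hhmeas : Measurable h := hmmeas.comp ((measurable_real_toNNReal.inv).mul_const t)
  have hgl := gamma_law P E hEmeas hexp hInd2
  have hsum1 : ∑' i, ∫⁻ ω, m (u i ω) ∂P = ∫⁻ s in Set.Ioi (0:ℝ), h s := by
    have hterm : ∀ i, ∫⁻ ω, m (u i ω) ∂P = ∫⁻ s, h s * gammaDen i s := by
      intro i
      exact hgl i h hhmeas
    rw [tsum_congr hterm, ← lintegral_tsum (f := fun i s => h s * gammaDen i s) fun i =>
      (hhmeas.mul (measurable_gammaDen i)).aemeasurable]
    have hpt : ∀ s : ℝ, ∑' i, h s * gammaDen i s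
        = (Set.Ioi (0:ℝ)).indicator h s := by
      intro s
      rw [ENNReal.tsum_mul_left, gammaDen_tsum s]
      by_cases hs : s ∈ Set.Ioi (0:ℝ)
      · rw [Set.indicator_of_mem hs, Set.indicator_of_mem hs, Pi.one_apply, mul_one]
      · rw [Set.indicator_of_notMem hs, Set.indicator_of_notMem hs, mul_zero]
    rw [lintegral_congr hpt, lintegral_indicator measurableSet_Ioi]
  -- change of variables s ↦ t / s
  have hchange : ∫⁻ s in Set.Ioi (0:ℝ), h s
      = ∫⁻ x in Set.Ioi (0:ℝ), ENNReal.ofReal ((t:ℝ) * (x^2)⁻¹) * m (x.toNNReal) := by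
    set f : ℝ → ℝ := fun x => (t:ℝ) / x with hf
    set f' : ℝ → ℝ := fun x => (t:ℝ) * -(x^2)⁻¹ with hf'
    have himg : f '' Set.Ioi 0 = Set.Ioi 0 := by
      ext y
      constructor
      · rintro ⟨x, hx, rfl⟩
        exact div_pos htpos hx
      · intro hy
        refine ⟨(t:ℝ) / y, div_pos htpos hy, ?_⟩
        rw [hf]
        field_simp
      -- f (t/y) = t/(t/y) = y
    have hderiv : ∀ x ∈ Set.Ioi (0:ℝ), HasDerivWithinAt f (f' x) (Set.Ioi 0) x := by
      intro x hx
      have h1 := (hasDerivAt_inv (ne_of_gt hx)).const_mul (t:ℝ)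
      have h2 : HasDerivAt f ((t:ℝ) * -(x^2)⁻¹) x := by
        apply h1.congr_of_eventuallyEq
        filter_upwards with y
        exact div_eq_mul_inv _ _
      exact h2.hasDerivWithinAt
    have hinj : Set.InjOn f (Set.Ioi 0) := by
      intro a ha b hb hab
      have h2 : (t:ℝ) / ((t:ℝ)/a) = (t:ℝ) / ((t:ℝ)/b) := by
        show (t:ℝ) / f a = (t:ℝ) / f b
        rw [hab]
      rwa [div_div_cancel₀, div_div_cancel₀] at h2
      · exact ne_of_gt htpos
      · exact ne_of_gt htpos
    calc ∫⁻ s in Set.Ioi (0:ℝ), h s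
        = ∫⁻ s in f '' Set.Ioi (0:ℝ), h s := by rw [himg]
      _ = ∫⁻ x in Set.Ioi (0:ℝ), ENNReal.ofReal |f' x| * h (f x) :=
          lintegral_image_eq_lintegral_abs_deriv_mul' measurableSet_Ioi hderiv hinj h
      _ = ∫⁻ x in Set.Ioi (0:ℝ), ENNReal.ofReal ((t:ℝ) * (x^2)⁻¹) * m (x.toNNReal) := ?_
    apply setLIntegral_congr_fun measurableSet_Ioi
    intro x hx
    have habs : |f' x| = (t:ℝ) * (x^2)⁻¹ := by
      rw [hf', abs_mul, abs_neg, abs_inv, abs_of_nonneg (NNReal.coe_nonneg t),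
        abs_of_pos (pow_pos hx 2)]
    have harg : h (f x) = m (x.toNNReal) := by
      show m ((((t:ℝ)/x)).toNNReal⁻¹ * t) = m (x.toNNReal)
      have h1 : ((t:ℝ)/x).toNNReal = t / x.toNNReal := by
        rw [Real.toNNReal_div (NNReal.coe_nonneg t), Real.toNNReal_coe]
      rw [h1, inv_div, div_mul_cancel₀ _ ht]
    beta_reduce
    rw [habs, harg]
  -- Tonelli to connect with the moment assumption
  have hbadset : ∃ N : Set Ω, MeasurableSet N ∧ P N = 0 ∧
      {ω | ¬ (Cadlag (eps 0 ω) ∧ eps 0 ω 0 = 0 ∧ eps 0 ω ≠ 0)} ⊆ N := by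
    obtain ⟨N, hsub, hmeas, hnull⟩ := exists_measurable_superset_of_null (ae_iff.mp (hD 0))
    exact ⟨N, hmeas, hnull, hsub⟩
  obtain ⟨N, hNmeas, hNnull, hNsub⟩ := hbadset
  have htonelli : ∫⁻ x in Set.Ioi (0:ℝ), ENNReal.ofReal ((t:ℝ) * (x^2)⁻¹) * m (x.toNNReal)
      = ENNReal.ofReal (t:ℝ) * ∫⁻ ω, (∫⁻ x in Set.Ioi (0 : ℝ),
        ENNReal.ofReal (min 1 |eps 0 ω x.toNNReal| / x ^ 2)) ∂P := by
    set W : ℝ → Ω → ℝ≥0∞ := fun x ω =>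
      ENNReal.ofReal ((t:ℝ) * (x^2)⁻¹) * ENNReal.ofReal (min 1 |eps 0 ω x.toNNReal|) with hW
    have hstep1 : ∫⁻ x in Set.Ioi (0:ℝ), ENNReal.ofReal ((t:ℝ) * (x^2)⁻¹) * m (x.toNNReal)
        = ∫⁻ x in Set.Ioi (0:ℝ), ∫⁻ ω, W x ω ∂P := by
      apply lintegral_congr
      intro x
      rw [hm, ← lintegral_const_mul _ (hF 0 (x.toNNReal))]
    have hWaem : AEMeasurable (fun p : ℝ × Ω => W p.1 p.2)
        ((volume.restrict (Set.Ioi (0:ℝ))).prod P) := by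
      set Wap : ℕ → ℝ × Ω → ℝ≥0∞ := fun n p =>
        ENNReal.ofReal ((t:ℝ) * (p.1^2)⁻¹)
          * ENNReal.ofReal (min 1 |eps 0 p.2 (dyad n (p.1.toNNReal))|) with hWap
      have hWapmeas : ∀ n, Measurable (Wap n) := by
        intro n
        apply Measurable.mul (f := fun p : ℝ × Ω => ENNReal.ofReal ((t:ℝ) * (p.1^2)⁻¹))
          (g := fun p : ℝ × Ω => ENNReal.ofReal (min 1 |eps 0 p.2 (dyad n (p.1.toNNReal))|))
        · exact (measurable_const.mul
            ((measurable_fst.pow_const 2).inv)).ennreal_ofReal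
        · have heval : Measurable fun p : ℝ × Ω => eps 0 p.2 (dyad n (p.1.toNNReal)) := by
            apply measurable_eval_countable
              ((measurable_dyad n).comp (measurable_real_toNNReal.comp measurable_fst))
              (Set.Countable.mono (by rintro x ⟨p, rfl⟩; exact dyad_mem_range n _)
                (Set.countable_range fun k : ℕ => (k : ℝ≥0) / 2 ^ n))
              (F := fun p q => eps 0 p.2 q)
            intro q
            exact (measurable_pi_apply q).comp ((hepsmeas 0).comp measurable_snd)
          exact (measurable_const.min heval.abs).ennreal_ofReal
      have hnullprod : ((volume.restrict (Set.Ioi (0:ℝ))).prod P) (Set.univ ×ˢ N) = 0 := by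
        rw [Measure.prod_prod, hNnull, mul_zero]
      have hae : ∀ᵐ p ∂((volume.restrict (Set.Ioi (0:ℝ))).prod P),
          Filter.Tendsto (fun n => Wap n p) Filter.atTop (nhds (W p.1 p.2)) := by
        rw [ae_iff]
        apply measure_mono_null _ hnullprod
        intro p hp
        simp only [Set.mem_setOf_eq] at hp
        simp only [Set.mem_prod, Set.mem_univ, true_and]
        by_contra hpN
        apply hp
        have hgood : Cadlag (eps 0 p.2) ∧ eps 0 p.2 0 = 0 ∧ eps 0 p.2 ≠ 0 := by
          by_contra hbad
          exact hpN (hNsub hbad)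
        have htd : Filter.Tendsto
            (fun n => ENNReal.ofReal (min 1 |eps 0 p.2 (dyad n (p.1.toNNReal))|))
            Filter.atTop (nhds (ENNReal.ofReal (min 1 |eps 0 p.2 (p.1.toNNReal)|))) :=
          (hcont.tendsto _).comp (tendsto_eval_dyad (hgood.1.1 (p.1.toNNReal)))
        exact ENNReal.Tendsto.const_mul htd (Or.inr ENNReal.ofReal_ne_top)
      have hG : Measurable fun p : ℝ × Ω =>
          Filter.liminf (fun n => Wap n p) Filter.atTop := Measurable.liminf hWapmeas
      apply hG.aemeasurable.congr
      filter_upwards [hae] with p hp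
      exact hp.liminf_eq
    have hswap : ∫⁻ x in Set.Ioi (0:ℝ), ∫⁻ ω, W x ω ∂P
        = ∫⁻ ω, (∫⁻ x in Set.Ioi (0:ℝ), W x ω) ∂P := by
      exact lintegral_lintegral_swap hWaem
    rw [hstep1, hswap]
    have hinner : ∀ ω, ∫⁻ x in Set.Ioi (0:ℝ), W x ω
        = ENNReal.ofReal (t:ℝ) * ∫⁻ x in Set.Ioi (0 : ℝ),
          ENNReal.ofReal (min 1 |eps 0 ω x.toNNReal| / x ^ 2) := by
      intro ω
      have hpull : ∫⁻ x in Set.Ioi (0:ℝ), ENNReal.ofReal (t:ℝ) *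
            ENNReal.ofReal (min 1 |eps 0 ω x.toNNReal| / x ^ 2)
          = ENNReal.ofReal (t:ℝ) * ∫⁻ x in Set.Ioi (0:ℝ),
            ENNReal.ofReal (min 1 |eps 0 ω x.toNNReal| / x ^ 2) :=
        lintegral_const_mul' _ _ ENNReal.ofReal_ne_top
      rw [← hpull]
      apply setLIntegral_congr_fun measurableSet_Ioi
      intro x hx
      show ENNReal.ofReal ((t:ℝ) * (x^2)⁻¹) * ENNReal.ofReal (min 1 |eps 0 ω x.toNNReal|)
          = ENNReal.ofReal (t:ℝ) * ENNReal.ofReal (min 1 |eps 0 ω x.toNNReal| / x ^ 2)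
      rw [← ENNReal.ofReal_mul (by positivity), ← ENNReal.ofReal_mul (NNReal.coe_nonneg t)]
      congr 1
      ring
    rw [lintegral_congr hinner]
    exact lintegral_const_mul' _ _ ENNReal.ofReal_ne_top
  -- put everything together
  have hsummary : ∫⁻ ω, ∑' i, X i ω ∂P ≠ ⊤ := by
    have h1 : ∫⁻ ω, ∑' i, X i ω ∂P = ∑' i, ∫⁻ ω, X i ω ∂P := lintegral_tsum hXaem
    have h2 : ∑' i, ∫⁻ ω, X i ω ∂P ≤ ∑' i, ∫⁻ ω, m (u i ω) ∂P :=
      ENNReal.tsum_le_tsum hXle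
    have h3 : (∑' i, ∫⁻ ω, m (u i ω) ∂P) = ENNReal.ofReal (t:ℝ)
        * ∫⁻ ω, (∫⁻ x in Set.Ioi (0 : ℝ),
          ENNReal.ofReal (min 1 |eps 0 ω x.toNNReal| / x ^ 2)) ∂P := by
      rw [hsum1, hchange, htonelli]
    have h4 : ENNReal.ofReal (t:ℝ) * ∫⁻ ω, (∫⁻ x in Set.Ioi (0 : ℝ),
        ENNReal.ofReal (min 1 |eps 0 ω x.toNNReal| / x ^ 2)) ∂P < ⊤ :=
      ENNReal.mul_lt_top ENNReal.ofReal_lt_top (lt_top_iff_ne_top.mpr hmom)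
    rw [h1]
    exact ne_top_of_le_ne_top (ne_of_lt (lt_of_le_of_lt (h2.trans (le_of_eq h3)) h4)) le_rfl
  have hfin : ∀ᵐ ω ∂P, ∑' i, X i ω ≠ ⊤ := by
    have := ae_lt_top' (AEMeasurable.ennreal_tsum hXaem) hsummary
    filter_upwards [this] with ω hω
    exact hω.ne
  filter_upwards [hfin] with ω hω
  exact summable_abs_of_tsum_ofReal_min_ne_top hω
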